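/- Let F be a field and let I be the ideal of F[X,Y] generated by Y^{22}, X^4Y^{18}, X^7Y^{15}, X^8Y^{14}, X^{11}Y^{11}, X^{14}Y^8, X^{15}Y^7, X^{18}Y^4, X^{22}. Then I is Ratliff-Rush closed, i.e. ⋃_{k≥0} (I^{k+1} : I^k) = I, but I^2 is not Ratliff-Rush closed: indeed X^{20}Y^{24}·I ⊆ I^3 and X^{20}Y^{24} ∉ I^2, so X^{20}Y^{24} ∈ ~(I^2) \ I^2. -/

import Mathlib

open MvPolynomial

namespace RRaux

/-- pair exponent -/
noncomputable def eab (a b : ℕ) : Fin 2 →₀ ℕ := Finsupp.single 0 a + Finsupp.single 1 b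

@[simp] lemma eab_apply0 (a b : ℕ) : eab a b 0 = a := by
  simp [eab, Finsupp.single_apply]

@[simp] lemma eab_apply1 (a b : ℕ) : eab a b 1 = b := by
  simp [eab, Finsupp.single_apply]

lemma eab_add (a b c d : ℕ) : eab a b + eab c d = eab (a+c) (b+d) := by
  simp [eab, Finsupp.single_add]
  abel

@[simp] lemma eab_zero : eab 0 0 = 0 := by simp [eab]

lemma eab_le {a b : ℕ} {m : Fin 2 →₀ ℕ} : eab a b ≤ m ↔ a ≤ m 0 ∧ b ≤ m 1 := by
  rw [Finsupp.le_def, Fin.forall_fin_two]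
  simp

lemma le_coords {s m : Fin 2 →₀ ℕ} (h : s ≤ m) : s 0 ≤ m 0 ∧ s 1 ≤ m 1 :=
  ⟨Finsupp.le_def.mp h 0, Finsupp.le_def.mp h 1⟩

def Sgen : Set (Fin 2 →₀ ℕ) :=
  {eab 0 22, eab 4 18, eab 7 15, eab 8 14, eab 11 11, eab 14 8, eab 15 7, eab 18 4, eab 22 0}

def Spow : ℕ → Set (Fin 2 →₀ ℕ)
  | 0 => {0}
  | n+1 => {t | ∃ u ∈ Spow n, ∃ s ∈ Sgen, t = u + s}


variable {F : Type*} [Field F]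

noncomputable def mono (s : Fin 2 →₀ ℕ) : MvPolynomial (Fin 2) F := monomial s 1

lemma mono_mul (s t : Fin 2 →₀ ℕ) : (mono s : MvPolynomial (Fin 2) F) * mono t = mono (s+t) := by
  simp [mono, monomial_mul]

lemma XY_eq_mono (a b : ℕ) :
    (X 0 : MvPolynomial (Fin 2) F) ^ a * X 1 ^ b = mono (eab a b) := by
  simp [mono, X_pow_eq_monomial, monomial_mul, eab]

noncomputable def Ispan : Ideal (MvPolynomial (Fin 2) F) := Ideal.span (mono '' Sgen)

lemma span_img_pow (n : ℕ) :
    (Ispan : Ideal (MvPolynomial (Fin 2) F)) ^ n = Ideal.span (mono '' Spow n) := by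
  induction n with
  | zero =>
    have : (mono '' Spow 0 : Set (MvPolynomial (Fin 2) F)) = {1} := by
      simp [Spow, mono]
    simp [this, Ideal.span_singleton_one]
  | succ n ih =>
    rw [pow_succ, ih, Ispan, Ideal.span_mul_span']
    congr 1
    ext p
    simp only [Set.mem_mul, Set.mem_image, Spow, Set.mem_setOf_eq]
    constructor
    · rintro ⟨_, ⟨u, hu, rfl⟩, _, ⟨s, hs, rfl⟩, rfl⟩
      exact ⟨u+s, ⟨u, hu, s, hs, rfl⟩, (mono_mul u s).symm⟩
    · rintro ⟨_, ⟨u, hu, s, hs, rfl⟩, rfl⟩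
      exact ⟨mono u, ⟨u, hu, rfl⟩, mono s, ⟨s, hs, rfl⟩, mono_mul u s⟩

def Bd (x : ℕ) : Prop :=
  x = 0 ∨ x = 4 ∨ x = 7 ∨ x = 8 ∨ x = 11 ∨ x = 12 ∨ x = 14 ∨ x = 15 ∨ x = 16 ∨
    x = 18 ∨ x = 19 ∨ x = 20 ∨ x = 21

lemma Sgen_coords {s : Fin 2 →₀ ℕ} (hs : s ∈ Sgen) :
    (s 0 = 0 ∧ s 1 = 22) ∨ (s 0 = 4 ∧ s 1 = 18) ∨ (s 0 = 7 ∧ s 1 = 15) ∨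
    (s 0 = 8 ∧ s 1 = 14) ∨ (s 0 = 11 ∧ s 1 = 11) ∨ (s 0 = 14 ∧ s 1 = 8) ∨
    (s 0 = 15 ∧ s 1 = 7) ∨ (s 0 = 18 ∧ s 1 = 4) ∨ (s 0 = 22 ∧ s 1 = 0) := by
  simp only [Sgen, Set.mem_insert_iff, Set.mem_singleton_iff] at hs
  rcases hs with rfl|rfl|rfl|rfl|rfl|rfl|rfl|rfl|rfl <;> simp

lemma Bd_closed {x y : ℕ} (hx : Bd x)
    (hy : y = 0 ∨ y = 4 ∨ y = 7 ∨ y = 8 ∨ y = 11 ∨ y = 14 ∨ y = 15 ∨ y = 18)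
    (h : x + y ≤ 21) : Bd (x + y) := by
  unfold Bd at hx ⊢
  rcases hx with rfl|rfl|rfl|rfl|rfl|rfl|rfl|rfl|rfl|rfl|rfl|rfl|rfl <;>
    rcases hy with rfl|rfl|rfl|rfl|rfl|rfl|rfl|rfl <;> omega

lemma Spow_struct {n : ℕ} {t : Fin 2 →₀ ℕ} (ht : t ∈ Spow n) :
    t 0 + t 1 = 22 * n ∧ (t 0 ≤ 21 → Bd (t 0)) ∧ (t 1 ≤ 21 → Bd (t 1)) := by
  induction n generalizing t with
  | zero =>
    simp only [Spow, Set.mem_singleton_iff] at ht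
    subst ht
    simp [Bd]
  | succ n ih =>
    obtain ⟨u, hu, s, hs, rfl⟩ := ht
    obtain ⟨h1, h2, h3⟩ := ih hu
    have hc := Sgen_coords hs
    rw [Finsupp.add_apply, Finsupp.add_apply]
    refine ⟨by omega, fun hle => ?_, fun hle => ?_⟩
    · exact Bd_closed (h2 (by omega)) (by omega) hle
    · exact Bd_closed (h3 (by omega)) (by omega) hle

lemma eab_Y_mem (k : ℕ) : eab 0 (22 * k) ∈ Spow k := by
  induction k with
  | zero => simp [Spow]
  | succ k ih =>
    exact ⟨eab 0 (22 * k), ih, eab 0 22, by simp [Sgen],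
      by rw [eab_add]; norm_num; ring_nf⟩

lemma eab_X_mem (k : ℕ) : eab (22 * k) 0 ∈ Spow k := by
  induction k with
  | zero => simp [Spow]
  | succ k ih =>
    exact ⟨eab (22 * k) 0, ih, eab 22 0, by simp [Sgen],
      by rw [eab_add]; norm_num; ring_nf⟩

set_option maxHeartbeats 1000000 in
lemma cube_mem {R : Type*} [CommRing R] {I : Ideal R} {a b c : R}
    (ha : a ∈ I) (hb : b ∈ I) (hc : c ∈ I) : a * b * c ∈ I ^ 3 := by
  have h2 : a * b ∈ I ^ 2 := by
    rw [pow_two]; exact Ideal.mul_mem_mul ha hb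
  have h3 := Ideal.mul_mem_mul h2 hc
  rwa [← pow_succ] at h3

lemma colon_le (k : ℕ) :
    ((Ispan : Ideal (MvPolynomial (Fin 2) F)) ^ (1 + k)).colon ((Ispan ^ k : Ideal (MvPolynomial (Fin 2) F)) : Set (MvPolynomial (Fin 2) F)) ≤ Ispan := by
  intro f hf
  have hY : (mono (eab 0 (22 * k)) : MvPolynomial (Fin 2) F) ∈ Ispan ^ k := by
    rw [span_img_pow]
    exact Ideal.subset_span ⟨_, eab_Y_mem k, rfl⟩
  have hX : (mono (eab (22 * k) 0) : MvPolynomial (Fin 2) F) ∈ Ispan ^ k := by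
    rw [span_img_pow]
    exact Ideal.subset_span ⟨_, eab_X_mem k, rfl⟩
  have hfY : f * mono (eab 0 (22 * k)) ∈ Ideal.span (mono '' Spow (1 + k) : Set (MvPolynomial (Fin 2) F)) := by
    rw [← span_img_pow]
    simpa using Submodule.mem_colon.mp hf _ hY
  have hfX : f * mono (eab (22 * k) 0) ∈ Ideal.span (mono '' Spow (1 + k) : Set (MvPolynomial (Fin 2) F)) := by
    rw [← span_img_pow]
    simpa using Submodule.mem_colon.mp hf _ hX
  rw [Ispan, show (mono '' Sgen : Set (MvPolynomial (Fin 2) F)) = (fun s => monomial s (1:F)) '' Sgen from rfl,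
    mem_ideal_span_monomial_image]
  intro m hm
  rw [show (mono '' Spow (1+k) : Set (MvPolynomial (Fin 2) F)) = (fun s => monomial s (1:F)) '' Spow (1+k) from rfl,
    mem_ideal_span_monomial_image] at hfY hfX
  have hmY : m + eab 0 (22 * k) ∈ (f * mono (eab 0 (22 * k))).support := by
    rw [mem_support_iff, mono, coeff_mul_monomial, mul_one]
    exact mem_support_iff.mp hm
  have hmX : m + eab (22 * k) 0 ∈ (f * mono (eab (22 * k) 0)).support := by
    rw [mem_support_iff, mono, coeff_mul_monomial, mul_one]
    exact mem_support_iff.mp hm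
  obtain ⟨t, ht, htle⟩ := hfY _ hmY
  obtain ⟨t', ht', ht'le⟩ := hfX _ hmX
  obtain ⟨hts, htB0, htB1⟩ := Spow_struct ht
  obtain ⟨hts', htB0', htB1'⟩ := Spow_struct ht'
  obtain ⟨ht0, ht1⟩ := le_coords htle
  obtain ⟨ht0', ht1'⟩ := le_coords ht'le
  rw [Finsupp.add_apply, eab_apply0] at ht0 ht0'
  rw [Finsupp.add_apply, eab_apply1] at ht1 ht1'
  have key : (22 ≤ m 1) ∨ (4 ≤ m 0 ∧ 18 ≤ m 1) ∨ (7 ≤ m 0 ∧ 15 ≤ m 1) ∨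
      (8 ≤ m 0 ∧ 14 ≤ m 1) ∨ (11 ≤ m 0 ∧ 11 ≤ m 1) ∨ (14 ≤ m 0 ∧ 8 ≤ m 1) ∨
      (15 ≤ m 0 ∧ 7 ≤ m 1) ∨ (18 ≤ m 0 ∧ 4 ≤ m 1) ∨ (22 ≤ m 0) := by
    unfold Bd at htB0 htB1 htB0' htB1'
    omega
  rcases key with h|h|h|h|h|h|h|h|h
  · exact ⟨eab 0 22, by simp [Sgen], eab_le.mpr ⟨Nat.zero_le _, h⟩⟩
  · exact ⟨eab 4 18, by simp [Sgen], eab_le.mpr h⟩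
  · exact ⟨eab 7 15, by simp [Sgen], eab_le.mpr h⟩
  · exact ⟨eab 8 14, by simp [Sgen], eab_le.mpr h⟩
  · exact ⟨eab 11 11, by simp [Sgen], eab_le.mpr h⟩
  · exact ⟨eab 14 8, by simp [Sgen], eab_le.mpr h⟩
  · exact ⟨eab 15 7, by simp [Sgen], eab_le.mpr h⟩
  · exact ⟨eab 18 4, by simp [Sgen], eab_le.mpr h⟩
  · exact ⟨eab 22 0, by simp [Sgen], eab_le.mpr ⟨h, Nat.zero_le _⟩⟩

end RRaux


open RRaux

/-- The Ratliff-Rush closure of the power `I^n`:  `⋃_{k≥0} (I^{n+k} : I^k)`. -/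
noncomputable def rrPow {R : Type*} [CommRing R] (I : Ideal R) (n : ℕ) : Ideal R :=
  ⨆ k : ℕ, (I ^ (n + k)).colon ((I ^ k : Ideal R) : Set R)

/-- The ideal `I = (Y^22, X^4Y^18, X^7Y^15, X^8Y^14, X^11Y^11, X^14Y^8, X^15Y^7,
X^18Y^4, X^22)` of `F[X,Y]` is Ratliff-Rush closed, but `I^2` is not:
`X^20Y^24·I ⊆ I^3` and `X^20Y^24 ∉ I^2`, so `X^20Y^24 ∈ ~(I^2) \ I^2`. -/
theorem stmt_10 (F : Type*) [Field F]
    (X Y : MvPolynomial (Fin 2) F)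
    (hX : X = MvPolynomial.X 0) (hY : Y = MvPolynomial.X 1)
    (I : Ideal (MvPolynomial (Fin 2) F))
    (hI : I = Ideal.span {Y ^ 22, X ^ 4 * Y ^ 18, X ^ 7 * Y ^ 15, X ^ 8 * Y ^ 14,
      X ^ 11 * Y ^ 11, X ^ 14 * Y ^ 8, X ^ 15 * Y ^ 7, X ^ 18 * Y ^ 4, X ^ 22}) :
    rrPow I 1 = I ∧
    (∀ f ∈ I, X ^ 20 * Y ^ 24 * f ∈ I ^ 3) ∧
    X ^ 20 * Y ^ 24 ∉ I ^ 2 ∧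
    X ^ 20 * Y ^ 24 ∈ rrPow I 2 ∧
    rrPow I 2 ≠ I ^ 2 := by
  have hXY : ∀ a b : ℕ, X ^ a * Y ^ b = (RRaux.mono (eab a b) : MvPolynomial (Fin 2) F) := by
    intro a b
    rw [hX, hY]
    exact XY_eq_mono a b
  have hI' : I = (Ispan : Ideal (MvPolynomial (Fin 2) F)) := by
    rw [hI]
    rw [show Y ^ 22 = X ^ 0 * Y ^ 22 by ring, show X ^ 22 = X ^ 22 * Y ^ 0 by ring]
    simp only [hXY]
    rw [Ispan, Sgen]
    simp only [Set.image_insert_eq, Set.image_singleton]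
  have hgen : ∀ a b : ℕ, eab a b ∈ Sgen → X ^ a * Y ^ b ∈ I := by
    intro a b hab
    rw [hI', Ispan, hXY]
    exact Ideal.subset_span ⟨eab a b, hab, rfl⟩
  have h418 : X ^ 4 * Y ^ 18 ∈ I := hgen 4 18 (by simp [Sgen])
  have h715 : X ^ 7 * Y ^ 15 ∈ I := hgen 7 15 (by simp [Sgen])
  have h814 : X ^ 8 * Y ^ 14 ∈ I := hgen 8 14 (by simp [Sgen])
  have h1111 : X ^ 11 * Y ^ 11 ∈ I := hgen 11 11 (by simp [Sgen])
  have h148 : X ^ 14 * Y ^ 8 ∈ I := hgen 14 8 (by simp [Sgen])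
  have h157 : X ^ 15 * Y ^ 7 ∈ I := hgen 15 7 (by simp [Sgen])
  have h184 : X ^ 18 * Y ^ 4 ∈ I := hgen 18 4 (by simp [Sgen])
  have h220 : X ^ 22 ∈ I := by
    have := hgen 22 0 (by simp [Sgen])
    rwa [pow_zero, mul_one] at this
  -- part 2
  have part2 : ∀ f ∈ I, X ^ 20 * Y ^ 24 * f ∈ I ^ 3 := by
    have key : I ≤ (I ^ 3).colon (Ideal.span {X ^ 20 * Y ^ 24}) := by
      conv_lhs => rw [hI]
      apply Ideal.span_le.mpr
      rintro g hg'
      simp only [Set.mem_insert_iff, Set.mem_singleton_iff] at hg'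
      rw [SetLike.mem_coe, Ideal.mem_colon_span_singleton]
      rcases hg' with rfl|rfl|rfl|rfl|rfl|rfl|rfl|rfl|rfl
      · rw [show Y^22 * (X^20*Y^24) = (X^4*Y^18) * (X^8*Y^14) * (X^8*Y^14) by ring]
        exact cube_mem h418 h814 h814
      · rw [show (X^4*Y^18) * (X^20*Y^24) = (X^8*Y^14) * (X^8*Y^14) * (X^8*Y^14) by ring]
        exact cube_mem h814 h814 h814
      · rw [show (X^7*Y^15) * (X^20*Y^24) = (X^11*Y^11) * (X^8*Y^14) * (X^8*Y^14) by ring]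
        exact cube_mem h1111 h814 h814
      · rw [show (X^8*Y^14) * (X^20*Y^24) = (X^14*Y^8) * (X^7*Y^15) * (X^7*Y^15) by ring]
        exact cube_mem h148 h715 h715
      · rw [show (X^11*Y^11) * (X^20*Y^24) = (X^15*Y^7) * (X^8*Y^14) * (X^8*Y^14) by ring]
        exact cube_mem h157 h814 h814
      · rw [show (X^14*Y^8) * (X^20*Y^24) = (X^18*Y^4) * (X^8*Y^14) * (X^8*Y^14) by ring]
        exact cube_mem h184 h814 h814
      · rw [show (X^15*Y^7) * (X^20*Y^24) = (X^14*Y^8) * (X^14*Y^8) * (X^7*Y^15) by ring]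
        exact cube_mem h148 h148 h715
      · rw [show (X^18*Y^4) * (X^20*Y^24) = (X^22) * (X^8*Y^14) * (X^8*Y^14) by ring]
        exact cube_mem h220 h814 h814
      · rw [show (X^22) * (X^20*Y^24) = (X^14*Y^8) * (X^14*Y^8) * (X^14*Y^8) by ring]
        exact cube_mem h148 h148 h148
    intro f hf
    rw [mul_comm]
    exact Ideal.mem_colon_span_singleton.mp (key hf)
  -- part 1
  have part1 : rrPow I 1 = I := by
    apply le_antisymm
    · rw [hI']
      simp only [rrPow]
      exact iSup_le fun k => colon_le k
    · refine le_trans ?_ (le_iSup (fun k => (I ^ (1 + k)).colon ((I ^ k : Ideal (MvPolynomial (Fin 2) F)) : Set (MvPolynomial (Fin 2) F))) 0)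
      intro f hf
      rw [Submodule.mem_colon]
      intro p hp
      rw [smul_eq_mul]
      have h10 : I ^ (1 + 0) = I := by norm_num
      rw [h10]
      exact Ideal.mul_mem_right p I hf
  -- part 3
  have part3 : X ^ 20 * Y ^ 24 ∉ I ^ 2 := by
    intro hmem
    rw [hXY 20 24, hI', span_img_pow] at hmem
    have hsupp : eab 20 24 ∈ (RRaux.mono (eab 20 24) : MvPolynomial (Fin 2) F).support := by
      rw [mem_support_iff]
      simp [RRaux.mono, coeff_monomial]
    obtain ⟨t, ht, hle⟩ := mem_ideal_span_monomial_image.mp hmem _ hsupp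
    obtain ⟨u, hu, s2, hs2, rfl⟩ := ht
    obtain ⟨u0, hu0, s1, hs1, rfl⟩ := hu
    simp only [Spow, Set.mem_singleton_iff] at hu0
    subst hu0
    obtain ⟨hle0, hle1⟩ := le_coords hle
    simp only [Finsupp.add_apply, Finsupp.coe_zero, Pi.zero_apply, eab_apply0, eab_apply1,
      zero_add] at hle0 hle1
    have hc1 := Sgen_coords hs1
    have hc2 := Sgen_coords hs2
    omega
  -- part 4
  have part4 : X ^ 20 * Y ^ 24 ∈ rrPow I 2 := by
    have hcol : X ^ 20 * Y ^ 24 ∈ (I ^ (2 + 1)).colon ((I ^ 1 : Ideal (MvPolynomial (Fin 2) F)) : Set (MvPolynomial (Fin 2) F)) := by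
      rw [Submodule.mem_colon]
      intro p hp
      rw [smul_eq_mul]
      have h3 : (2:ℕ) + 1 = 3 := rfl
      rw [h3]
      exact part2 p (by rwa [pow_one] at hp)
    exact le_iSup (fun k => (I ^ (2 + k)).colon ((I ^ k : Ideal (MvPolynomial (Fin 2) F)) : Set (MvPolynomial (Fin 2) F))) 1 hcol
  exact ⟨part1, part2, part3, part4, fun h => part3 (h ▸ part4)⟩
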